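/- Assume condition (g2) and that G is differentiable on (0,∞) with G' = g. Let u, v : ℝ^N → ℝ be measurable with ρ(u) < ∞ and ρ(v) < ∞, and assume the function (x,y) ↦ g(|v(x)−v(y)|/|x−y|^s)·sgn(v(x)−v(y))·((u−v)(x)−(u−v)(y))·|x−y|^(−s−N) is integrable on Q. Then ρ(u) − ρ(v) ≥ ∬_Q g(|v(x)−v(y)|/|x−y|^s)·sgn(v(x)−v(y))·((u−v)(x)−(u−v)(y))·|x−y|^(−s−N) dx dy. -/

import Mathlib

open MeasureTheory Set Real Filter
open scoped ENNReal

noncomputable section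

/-- `ℝ^N`. -/
abbrev Euc (N : ℕ) : Type := EuclideanSpace ℝ (Fin N)

/-- The open unit ball of `ℝ^N`. -/
def B1 (N : ℕ) : Set (Euc N) := Metric.ball 0 1

/-- `Q = ℝ^{2N} \ (B₁ᶜ × B₁ᶜ)`. -/
def Qset (N : ℕ) : Set (Euc N × Euc N) := {z : Euc N × Euc N | z.1 ∈ B1 N ∨ z.2 ∈ B1 N}

/-- The Young function `G(t) = ∫₀ᵗ g(τ) dτ`. -/
def YoungG (g : ℝ → ℝ) (t : ℝ) : ℝ := ∫ τ in (0:ℝ)..t, g τ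

/-- The modular `ρ(u) = ∬_Q G(|u(x)−u(y)|/|x−y|^s)·|x−y|^(−N) dx dy`. -/
def rho (N : ℕ) (s : ℝ) (g : ℝ → ℝ) (u : Euc N → ℝ) : ℝ≥0∞ :=
  ∫⁻ z in Qset N,
    ENNReal.ofReal (YoungG g (|u z.1 - u z.2| / dist z.1 z.2 ^ s) * dist z.1 z.2 ^ (-(N : ℝ)))

/-- The integrand `g(|u(x)−u(y)|/|x−y|^s)·sgn(u(x)−u(y))·(φ(x)−φ(y))·|x−y|^(−s−N)`. -/
def weakKernel (N : ℕ) (s : ℝ) (g : ℝ → ℝ) (u φ : Euc N → ℝ) (z : Euc N × Euc N) : ℝ :=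
  g (|u z.1 - u z.2| / dist z.1 z.2 ^ s) * Real.sign (u z.1 - u z.2) *
    (φ z.1 - φ z.2) * dist z.1 z.2 ^ (-s - (N : ℝ))

/-- A function on `ℝ^N` is radial if its value depends only on `|x|`. -/
def IsRadial (N : ℕ) (u : Euc N → ℝ) : Prop := ∀ x y : Euc N, ‖x‖ = ‖y‖ → u x = u y

/-- Basic structural hypotheses on `g`: right-continuous, non-decreasing on `[0,∞)`,
`g(0) = 0`, `g > 0` on `(0,∞)`, and `g(t) → ∞` as `t → ∞`. -/
def YoungHyp (g : ℝ → ℝ) : Prop :=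
  g 0 = 0 ∧ (∀ t > (0:ℝ), 0 < g t) ∧ MonotoneOn g (Set.Ici 0) ∧
    (∀ t ≥ (0:ℝ), ContinuousWithinAt g (Set.Ici t) t) ∧
    Filter.Tendsto g Filter.atTop Filter.atTop

/-- Condition (g): `1 < q⁻ ≤ t·g(t)/G(t) ≤ q⁺ < ∞` for all `t > 0`. -/
def CondG (g : ℝ → ℝ) (qm qp : ℝ) : Prop :=
  1 < qm ∧ qm ≤ qp ∧
    ∀ t > (0:ℝ), qm ≤ t * g t / YoungG g t ∧ t * g t / YoungG g t ≤ qp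

/-- Condition (g2): `t ↦ G(√t)` is convex on `[0,∞)`. -/
def CondG2 (g : ℝ → ℝ) : Prop :=
  ConvexOn ℝ (Set.Ici (0:ℝ)) (fun t => YoungG g (Real.sqrt t))

/-- `u` is a weak solution of `(−Δ_g)^s u + u = |u|^{p−2} u` in `B₁` with the nonlocal
Neumann condition, tested against all measurable radial `φ` with finite modular whose
restriction to `B₁` lies in `L² ∩ L^p`. -/
def IsWeakSolution (N : ℕ) (s p : ℝ) (g : ℝ → ℝ) (u : Euc N → ℝ) : Prop :=
  ∀ φ : Euc N → ℝ, Measurable φ → IsRadial N φ →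
    rho N s g φ < ⊤ →
    MemLp φ 2 (volume.restrict (B1 N)) →
    MemLp φ (ENNReal.ofReal p) (volume.restrict (B1 N)) →
    IntegrableOn (weakKernel N s g u φ) (Qset N) ∧
      ∫ z in Qset N, weakKernel N s g u φ z =
        ∫ x in B1 N, (|u x| ^ (p - 2) * u x - u x) * φ x

def YoungG' (g : ℝ → ℝ) (t : ℝ) : ℝ := ∫ τ in (0:ℝ)..t, g τ

lemma keyC' (g : ℝ → ℝ) (hmono : MonotoneOn g (Set.Ici 0)) (t1 t2 : ℝ)
    (h1 : 0 ≤ t1) (h2 : 0 ≤ t2) :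
    g t2 * (t1 - t2) ≤ YoungG' g t1 - YoungG' g t2 := by
  have hii : ∀ a b : ℝ, 0 ≤ a → 0 ≤ b → IntervalIntegrable g volume a b := by
    intro a b ha hb
    exact (hmono.mono (by
      intro x hx
      rcases Set.mem_uIcc.mp hx with h | h
      · exact le_trans ha h.1
      · exact le_trans hb h.1)).intervalIntegrable
  have hsplit : YoungG' g t1 - YoungG' g t2 = ∫ τ in t2..t1, g τ := by
    unfold YoungG'
    rw [← intervalIntegral.integral_add_adjacent_intervals (hii 0 t2 le_rfl h2) (hii t2 t1 h2 h1)]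
    ring
  rw [hsplit]
  rcases le_total t2 t1 with h | h
  · have e : g t2 * (t1 - t2) = ∫ _ in t2..t1, g t2 := by
      rw [intervalIntegral.integral_const, smul_eq_mul]; ring
    rw [e]
    apply intervalIntegral.integral_mono_on h intervalIntegrable_const (hii t2 t1 h2 h1)
    intro x hx
    exact hmono (Set.mem_Ici.mpr h2) (Set.mem_Ici.mpr (le_trans h2 hx.1)) hx.1
  · have hle : (∫ τ in t1..t2, g τ) ≤ ∫ _ in t1..t2, g t2 := by
      apply intervalIntegral.integral_mono_on h (hii t1 t2 h1 h2) intervalIntegrable_const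
      intro x hx
      exact hmono (Set.mem_Ici.mpr (le_trans h1 hx.1)) (Set.mem_Ici.mpr h2) hx.2
    rw [intervalIntegral.integral_symm t1 t2]
    rw [intervalIntegral.integral_const, smul_eq_mul] at hle
    linarith

lemma signmul (b a : ℝ) : Real.sign b * (a - b) ≤ |a| - |b| := by
  have h1 : Real.sign b * b = |b| := by
    rcases lt_trichotomy b 0 with h | h | h
    · rw [Real.sign_of_neg h, abs_of_neg h]; ring
    · simp [h]
    · rw [Real.sign_of_pos h, abs_of_pos h]; ring
  have habs : |Real.sign b| ≤ 1 := by
    rcases lt_trichotomy b 0 with h | h | h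
    · rw [Real.sign_of_neg h]; simp
    · simp [h]
    · rw [Real.sign_of_pos h]; simp
  have h2 : Real.sign b * a ≤ |a| := by
    calc Real.sign b * a ≤ |Real.sign b * a| := le_abs_self _
      _ = |Real.sign b| * |a| := abs_mul _ _
      _ ≤ 1 * |a| := mul_le_mul_of_nonneg_right habs (abs_nonneg a)
      _ = |a| := one_mul _
  nlinarith


/-- convexity inequality for the modular, cf. (3.10):
`ρ(u) − ρ(v) ≥ ∬_Q g(...)·sgn(v(x)−v(y))·((u−v)(x)−(u−v)(y))·|x−y|^{−s−N}`. -/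
theorem statement14
    (N : ℕ) (hN : 2 ≤ N) (s : ℝ) (hs : s ∈ Set.Ioo (0:ℝ) 1)
    (g : ℝ → ℝ) (hg : YoungHyp g) (hg2 : CondG2 g)
    (hderiv : ∀ t > (0:ℝ), HasDerivAt (YoungG g) (g t) t)
    (u v : Euc N → ℝ) (hu : Measurable u) (hv : Measurable v)
    (hru : rho N s g u < ⊤) (hrv : rho N s g v < ⊤)
    (hint : IntegrableOn (weakKernel N s g v (fun x => u x - v x)) (Qset N)) :
    (∫ z in Qset N, weakKernel N s g v (fun x => u x - v x) z) ≤
      (rho N s g u).toReal - (rho N s g v).toReal := by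
  obtain ⟨hg0, hgpos, hmono, _, _⟩ := hg
  have hYG : YoungG g = YoungG' g := rfl
  have keyC : ∀ t1 t2 : ℝ, 0 ≤ t1 → 0 ≤ t2 →
      g t2 * (t1 - t2) ≤ YoungG g t1 - YoungG g t2 := by
    rw [hYG]; exact fun t1 t2 h1 h2 => keyC' g hmono t1 t2 h1 h2
  have hgnn : ∀ t : ℝ, 0 ≤ t → 0 ≤ g t := by
    intro t ht
    have := hmono (Set.mem_Ici.mpr le_rfl) (Set.mem_Ici.mpr ht) ht
    linarith [hg0 ▸ this]
  have hG0 : YoungG g 0 = 0 := intervalIntegral.integral_same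
  have hGnn : ∀ t : ℝ, 0 ≤ t → 0 ≤ YoungG g t := by
    intro t ht
    have := keyC t 0 ht le_rfl
    rw [hg0, hG0] at this
    linarith
  -- the two modular integrands
  set Fu : Euc N × Euc N → ℝ := fun z =>
    YoungG g (|u z.1 - u z.2| / dist z.1 z.2 ^ s) * dist z.1 z.2 ^ (-(N : ℝ)) with hFu
  set Fv : Euc N × Euc N → ℝ := fun z =>
    YoungG g (|v z.1 - v z.2| / dist z.1 z.2 ^ s) * dist z.1 z.2 ^ (-(N : ℝ)) with hFv
  -- measurability
  have hGmax : Monotone (fun t : ℝ => YoungG g (max t 0)) := by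
    intro x y hxy
    have hx0 : (0:ℝ) ≤ max x 0 := le_max_right _ _
    have hy0 : (0:ℝ) ≤ max y 0 := le_max_right _ _
    have hxy' : max x 0 ≤ max y 0 := max_le_max hxy le_rfl
    have := keyC (max y 0) (max x 0) hy0 hx0
    nlinarith [hgnn (max x 0) hx0]
  have hdist : Measurable fun z : Euc N × Euc N => dist z.1 z.2 :=
    (continuous_fst.dist continuous_snd).measurable
  have hrp : ∀ p : ℝ, p ≠ 0 → Measurable (fun z : Euc N × Euc N => dist z.1 z.2 ^ p) := by
    intro p hp
    have he : (fun z : Euc N × Euc N => dist z.1 z.2 ^ p) =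
        fun z => if dist z.1 z.2 = 0 then 0 else Real.exp (Real.log (dist z.1 z.2) * p) := by
      funext z
      by_cases h : dist z.1 z.2 = 0
      · simp [h, Real.zero_rpow hp]
      · rw [if_neg h, Real.rpow_def_of_pos (lt_of_le_of_ne dist_nonneg (Ne.symm h))]
    rw [he]
    exact Measurable.ite (hdist (measurableSet_singleton 0)) measurable_const
      (Real.measurable_exp.comp ((Real.measurable_log.comp hdist).mul_const p))
  have hmeas : ∀ w : Euc N → ℝ, Measurable w → Measurable fun z : Euc N × Euc N =>
      YoungG g (|w z.1 - w z.2| / dist z.1 z.2 ^ s) * dist z.1 z.2 ^ (-(N : ℝ)) := by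
    intro w hw
    have hsne : s ≠ 0 := ne_of_gt hs.1
    have hNne : (-(N:ℝ)) ≠ 0 := by
      have : (0:ℝ) < (N:ℝ) := by exact_mod_cast lt_of_lt_of_le (by norm_num) hN
      linarith
    have hinner : Measurable fun z : Euc N × Euc N => |w z.1 - w z.2| / dist z.1 z.2 ^ s :=
      (((hw.comp measurable_fst).sub (hw.comp measurable_snd)).abs).div (hrp s hsne)
    have hinn0 : ∀ z : Euc N × Euc N, 0 ≤ |w z.1 - w z.2| / dist z.1 z.2 ^ s :=
      fun z => div_nonneg (abs_nonneg _) (Real.rpow_nonneg dist_nonneg s)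
    have hc : (fun z : Euc N × Euc N => YoungG g (|w z.1 - w z.2| / dist z.1 z.2 ^ s)) =
        (fun t : ℝ => YoungG g (max t 0)) ∘ (fun z => |w z.1 - w z.2| / dist z.1 z.2 ^ s) := by
      funext z
      simp only [Function.comp_apply, max_eq_left (hinn0 z)]
    exact (hc ▸ (hGmax.measurable.comp hinner)).mul (hrp (-(N:ℝ)) hNne)
  have hFunn : ∀ z, 0 ≤ Fu z := fun z =>
    mul_nonneg (hGnn _ (div_nonneg (abs_nonneg _) (Real.rpow_nonneg dist_nonneg s)))
      (Real.rpow_nonneg dist_nonneg _)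
  have hFvnn : ∀ z, 0 ≤ Fv z := fun z =>
    mul_nonneg (hGnn _ (div_nonneg (abs_nonneg _) (Real.rpow_nonneg dist_nonneg s)))
      (Real.rpow_nonneg dist_nonneg _)
  -- integrability of Fu, Fv
  have hfiu : Integrable Fu (volume.restrict (Qset N)) := by
    refine ⟨((hmeas u hu)).aestronglyMeasurable, ?_⟩
    rw [hasFiniteIntegral_iff_ofReal (ae_of_all _ hFunn)]
    exact hru
  have hfiv : Integrable Fv (volume.restrict (Qset N)) := by
    refine ⟨((hmeas v hv)).aestronglyMeasurable, ?_⟩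
    rw [hasFiniteIntegral_iff_ofReal (ae_of_all _ hFvnn)]
    exact hrv
  have htu : (rho N s g u).toReal = ∫ z in Qset N, Fu z := by
    have h := ofReal_integral_eq_lintegral_ofReal hfiu (ae_of_all _ hFunn)
    have : rho N s g u = ENNReal.ofReal (∫ z in Qset N, Fu z) := h.symm
    rw [this, ENNReal.toReal_ofReal (integral_nonneg hFunn)]
  have htv : (rho N s g v).toReal = ∫ z in Qset N, Fv z := by
    have h := ofReal_integral_eq_lintegral_ofReal hfiv (ae_of_all _ hFvnn)
    have : rho N s g v = ENNReal.ofReal (∫ z in Qset N, Fv z) := h.symm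
    rw [this, ENNReal.toReal_ofReal (integral_nonneg hFvnn)]
  -- pointwise inequality
  have hpt : ∀ z : Euc N × Euc N,
      weakKernel N s g v (fun x => u x - v x) z ≤ Fu z - Fv z := by
    intro z
    rcases eq_or_lt_of_le (dist_nonneg : (0:ℝ) ≤ dist z.1 z.2) with hr0 | hr
    · have h12 : z.1 = z.2 := dist_eq_zero.mp hr0.symm
      have hNne : (-(N:ℝ)) ≠ 0 := by
        have : (0:ℝ) < (N:ℝ) := by exact_mod_cast lt_of_lt_of_le (by norm_num) hN
        linarith
      have hz : dist z.1 z.2 = 0 := hr0.symm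
      have hwk : weakKernel N s g v (fun x => u x - v x) z = 0 := by
        simp [weakKernel, h12, Real.sign_zero]
      have hfu : Fu z = 0 := by
        simp [hFu, hz, Real.zero_rpow hNne]
        exact Or.inr (by omega)
      have hfv : Fv z = 0 := by
        simp [hFv, hz, Real.zero_rpow hNne]
        exact Or.inr (by omega)
      rw [hwk, hfu, hfv]; norm_num
    · set r := dist z.1 z.2 with hrdef
      have hd : (0:ℝ) < r ^ s := Real.rpow_pos_of_pos hr s
      have hw : (0:ℝ) < r ^ (-(N:ℝ)) := Real.rpow_pos_of_pos hr _
      set a := u z.1 - u z.2 with ha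
      set b := v z.1 - v z.2 with hb
      set ta := |a| / r ^ s with hta
      set tb := |b| / r ^ s with htb
      have hta0 : 0 ≤ ta := div_nonneg (abs_nonneg _) hd.le
      have htb0 : 0 ≤ tb := div_nonneg (abs_nonneg _) hd.le
      have hgtb : 0 ≤ g tb := hgnn tb htb0
      have hexp : r ^ (-s - (N:ℝ)) = (r ^ s)⁻¹ * r ^ (-(N:ℝ)) := by
        rw [show -s - (N:ℝ) = -s + -(N:ℝ) by ring, Real.rpow_add hr, Real.rpow_neg hr.le]
      have egoal : weakKernel N s g v (fun x => u x - v x) z =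
          g tb * (Real.sign b * (a - b)) * (r ^ s)⁻¹ * r ^ (-(N:ℝ)) := by
        simp only [weakKernel]
        rw [hexp]; ring
      have eF : Fu z - Fv z = (YoungG g ta - YoungG g tb) * r ^ (-(N:ℝ)) := by
        simp only [hFu, hFv]; ring
      rw [egoal, eF]
      apply mul_le_mul_of_nonneg_right _ hw.le
      calc g tb * (Real.sign b * (a - b)) * (r ^ s)⁻¹
          ≤ g tb * (|a| - |b|) * (r ^ s)⁻¹ := by
            apply mul_le_mul_of_nonneg_right
              (mul_le_mul_of_nonneg_left (signmul b a) hgtb) (inv_nonneg.mpr hd.le)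
        _ = g tb * (ta - tb) := by
            rw [mul_assoc, ← div_eq_mul_inv, sub_div]
        _ ≤ YoungG g ta - YoungG g tb := keyC ta tb hta0 htb0
  calc (∫ z in Qset N, weakKernel N s g v (fun x => u x - v x) z)
      ≤ ∫ z in Qset N, (Fu z - Fv z) := integral_mono hint (hfiu.sub hfiv) hpt
    _ = (∫ z in Qset N, Fu z) - ∫ z in Qset N, Fv z := integral_sub hfiu hfiv
    _ = (rho N s g u).toReal - (rho N s g v).toReal := by rw [htu, htv]
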